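/- arXiv:0912.0667 — 6 statements merged into one kernel-verified Lean document; each statement's English description precedes it below -/
import Mathlib

section
/- If a group G has exactly two non-nilpotent subgroups (necessarily G itself and some K < G), then K is a maximal subgroup of G and K is normal in G, and K is a minimal non-nilpotent group (K is not nilpotent but every proper subgroup of K is nilpotent). -/
/-- `M(G) = {H ≤ G : H not nilpotent}` has exactly the two elements `⊤` and `K`. -/
def ExactlyTwoNonNilpotent {G : Type*} [Group G] (K : Subgroup G) : Prop :=
  ¬ Group.IsNilpotent G ∧ K < ⊤ ∧ ¬ Group.IsNilpotent ↥K ∧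
    ∀ H : Subgroup G, ¬ Group.IsNilpotent ↥H → H = ⊤ ∨ H = K

/-- If `G` has exactly two non-nilpotent subgroups `G` and `K`, then `K` is a maximal
subgroup of `G`, `K` is normal in `G`, and `K` is a minimal non-nilpotent group. -/
theorem stmt0 {G : Type*} [Group G] (K : Subgroup G) (h : ExactlyTwoNonNilpotent K) :
    IsCoatom K ∧ K.Normal ∧ ¬ Group.IsNilpotent ↥K ∧
      ∀ L : Subgroup ↥K, L < ⊤ → Group.IsNilpotent ↥L := by
  obtain ⟨hG, hKlt, hKnn, hmem⟩ := h
  refine ⟨⟨hKlt.ne, ?_⟩, ?_, hKnn, ?_⟩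
  · -- maximality
    intro H hKH
    by_contra hHne
    have hHnn : ¬ Group.IsNilpotent ↥H := by
      intro hnil
      exact hKnn (nilpotent_of_mulEquiv (Subgroup.subgroupOfEquivOfLe hKH.le))
    rcases hmem H hHnn with rfl | rfl
    · exact hHne rfl
    · exact lt_irrefl _ hKH
  · -- normality
    constructor
    intro n hn g
    set K' := K.map ((MulAut.conj g).toMonoidHom) with hK'
    have e : ↥K ≃* ↥K' := (MulAut.conj g).subgroupMap K
    have hK'nn : ¬ Group.IsNilpotent ↥K' := fun hnil =>
      hKnn (nilpotent_of_mulEquiv e.symm)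
    rcases hmem K' hK'nn with htop | heq
    · exfalso
      apply hKlt.ne
      have : K'.map ((MulAut.conj g).symm.toMonoidHom) = K := by
        rw [hK', Subgroup.map_map]
        simp
      rw [← this, htop]
      rw [Subgroup.map_top_of_surjective _ (MulEquiv.surjective _)]
    · have : g * n * g⁻¹ ∈ K' := ⟨n, hn, rfl⟩
      rwa [heq] at this
  · -- minimal non-nilpotent
    intro L hL
    by_contra hLnn
    set M := L.map K.subtype with hM
    have e : ↥L ≃* ↥M := L.equivMapOfInjective K.subtype K.subtype_injective
    have hMnn : ¬ Group.IsNilpotent ↥M := fun hnil => hLnn (nilpotent_of_mulEquiv e.symm)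
    rcases hmem M hMnn with htop | heq
    · have : M ≤ K := by
        rw [hM]; exact Subgroup.map_subtype_le L
      rw [htop] at this
      exact hKlt.ne (top_le_iff.mp this)
    · apply hL.ne
      have := congrArg (Subgroup.comap K.subtype) heq
      rwa [hM, Subgroup.comap_map_eq_self_of_injective K.subtype_injective,
        Subgroup.comap_subtype, Subgroup.subgroupOf_self] at this
end

section
/- If a group G has exactly two non-nilpotent subgroups G and K, then the quotient G/K has prime order and the commutator subgroup G' is contained in K. -/
open scoped commutatorElement

/-- If `G` has exactly two non-nilpotent subgroups `G` and `K` (so `K` is maximal normal),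
then `G/K` has prime order and `G' ≤ K`. -/
theorem stmt1 {G : Type*} [Group G] (K : Subgroup G) [K.Normal]
    (h : ExactlyTwoNonNilpotent K) :
    (∃ p : ℕ, p.Prime ∧ Nat.card (G ⧸ K) = p) ∧ commutator G ≤ K := by
  obtain ⟨hG, hKlt, hKnn, hmax⟩ := h
  -- every subgroup of G/K is ⊥ or ⊤
  have hsub : ∀ Q : Subgroup (G ⧸ K), Q = ⊥ ∨ Q = ⊤ := by
    intro Q
    set H := Q.comap (QuotientGroup.mk' K) with hH
    have hKH : K ≤ H := by
      intro x hx
      simp only [hH, Subgroup.mem_comap]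
      rw [QuotientGroup.mk'_apply, show ((x : G ⧸ K)) = 1 from (QuotientGroup.eq_one_iff x).2 hx]
      exact Q.one_mem
    have hHnn : ¬ Group.IsNilpotent ↥H := by
      intro hnil
      exact hKnn (nilpotent_of_mulEquiv (Subgroup.subgroupOfEquivOfLe hKH))
    have hinj := Subgroup.comap_injective (f := QuotientGroup.mk' K)
      (QuotientGroup.mk'_surjective K)
    rcases hmax H hHnn with h1 | h2
    · right
      apply hinj
      rw [← hH, h1, Subgroup.comap_top]
    · left
      apply hinj
      rw [← hH, h2, MonoidHom.comap_bot, QuotientGroup.ker_mk']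
  -- G/K is nontrivial
  have hnt : Nontrivial (G ⧸ K) := by
    obtain ⟨g, -, hg⟩ := SetLike.exists_of_lt hKlt
    exact ⟨(g : G ⧸ K), 1, by simpa [QuotientGroup.eq_one_iff] using hg⟩
  -- G/K is cyclic
  have hcyc : IsCyclic (G ⧸ K) := by
    obtain ⟨g, hg⟩ := exists_ne (1 : G ⧸ K)
    have : Subgroup.zpowers g = ⊤ :=
      (hsub (Subgroup.zpowers g)).resolve_left (Subgroup.zpowers_ne_bot.2 hg)
    exact ⟨⟨g, (Subgroup.eq_top_iff' _).1 this⟩⟩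
  obtain ⟨g, hg⟩ := hcyc.exists_generator
  -- g has finite order
  have hfin : IsOfFinOrder g := by
    rcases hsub (Subgroup.zpowers (g ^ 2)) with hb | ht
    · have h2 : g ^ 2 = 1 := by
        have := Subgroup.mem_zpowers (g ^ 2)
        rw [hb, Subgroup.mem_bot] at this
        exact this
      exact isOfFinOrder_iff_pow_eq_one.2 ⟨2, two_pos, h2⟩
    · have hgmem : g ∈ Subgroup.zpowers (g ^ 2) := ht ▸ Subgroup.mem_top g
      obtain ⟨k, hk⟩ := hgmem
      have hk' : g ^ (2 * k) = g := by
        rw [zpow_mul]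
        rw [show ((2:ℤ)) = ((2:ℕ):ℤ) from rfl, zpow_natCast]
        exact hk
      have : g ^ (2 * k - 1) = 1 := by
        rw [zpow_sub, hk', zpow_one, mul_inv_cancel]
      exact isOfFinOrder_iff_zpow_eq_one.2 ⟨2 * k - 1, by omega, this⟩
  -- G/K is finite
  have hfinite : Finite (G ⧸ K) := by
    have : ((Subgroup.zpowers g : Subgroup (G ⧸ K)) : Set (G ⧸ K)).Finite :=
      hfin.finite_zpowers
    have htop : (Subgroup.zpowers g : Subgroup (G ⧸ K)) = ⊤ :=
      Subgroup.eq_top_iff' _ |>.2 hg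
    rw [htop] at this
    exact Set.finite_univ_iff.mp (by simpa using this)
  -- mul_comm in the cyclic quotient
  have hcomm : ∀ x y : G ⧸ K, x * y = y * x := by
    intro x y
    obtain ⟨m, hm⟩ := hg x
    obtain ⟨n, hn⟩ := hg y
    rw [← hm, ← hn]
    exact ((Commute.refl g).zpow_zpow m n).eq
  have hprime : (Nat.card (G ⧸ K)).Prime := by
    letI : CommGroup (G ⧸ K) :=
      { (inferInstance : Group (G ⧸ K)) with mul_comm := hcomm }
    haveI : IsSimpleGroup (G ⧸ K) := ⟨fun Q _ => hsub Q⟩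
    exact IsSimpleGroup.prime_card
  refine ⟨⟨Nat.card (G ⧸ K), hprime, rfl⟩, ?_⟩
  rw [commutator_def, Subgroup.commutator_le]
  intro a _ b _
  rw [← QuotientGroup.eq_one_iff]
  rw [show ((⁅a, b⁆ : G) : G ⧸ K) = ⁅(a : G ⧸ K), (b : G ⧸ K)⁆ from
    map_commutatorElement (QuotientGroup.mk' K) a b]
  exact commutatorElement_eq_one_iff_commute.2 (hcomm _ _)
end

section
/- If a group G has exactly two non-nilpotent subgroups G and K, and moreover G' is a proper subgroup of K, then G is solvable and the quotient G/G'' is not nilpotent. -/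
instance derivedSeriesNormal {G : Type*} [Group G] (n : ℕ) : (derivedSeries G n).Normal :=
  derivedSeries_normal G n

namespace HallAux

open Subgroup

variable {G : Type*} [Group G]

/-- Iterated commutator with the whole group: `cg X n = [X, G, G, ..., G]` (`n` copies of `G`). -/
def cg (X : Subgroup G) : ℕ → Subgroup G
  | 0 => X
  | n + 1 => ⁅cg X n, (⊤ : Subgroup G)⁆

@[simp] lemma cg_zero (X : Subgroup G) : cg X 0 = X := rfl

@[simp] lemma cg_succ (X : Subgroup G) (n : ℕ) : cg X (n + 1) = ⁅cg X n, (⊤ : Subgroup G)⁆ := rfl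

lemma cg_normal (X : Subgroup G) (hX : X.Normal) (n : ℕ) : (cg X n).Normal := by
  induction n with
  | zero => exact hX
  | succ n ih => exact @Subgroup.commutator_normal _ _ _ ⊤ ih inferInstance

lemma cg_mono {X Y : Subgroup G} (h : X ≤ Y) (n : ℕ) : cg X n ≤ cg Y n := by
  induction n with
  | zero => exact h
  | succ n ih => exact Subgroup.commutator_mono ih le_rfl

lemma cg_shift (X : Subgroup G) (n : ℕ) : cg ⁅X, (⊤ : Subgroup G)⁆ n = cg X (n + 1) := by
  induction n with
  | zero => rfl
  | succ n ih => rw [cg_succ, ih, ← cg_succ]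

lemma lcs_succ_eq (n : ℕ) :
    Subgroup.lowerCentralSeries (⊤ : Subgroup G) (n + 1) = ⁅Subgroup.lowerCentralSeries (⊤ : Subgroup G) n, (⊤ : Subgroup G)⁆ := rfl

lemma cg_lcs (s t : ℕ) :
    cg (Subgroup.lowerCentralSeries (⊤ : Subgroup G) s) t = Subgroup.lowerCentralSeries (⊤ : Subgroup G) (s + t) := by
  induction t with
  | zero => rfl
  | succ t ih => rw [cg_succ, ih, ← lcs_succ_eq, ← Nat.add_assoc]

lemma cg_le_lcs (X : Subgroup G) (n : ℕ) : cg X n ≤ Subgroup.lowerCentralSeries (⊤ : Subgroup G) n := by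
  have h1 : cg X n ≤ cg (Subgroup.lowerCentralSeries (⊤ : Subgroup G) 0) n := cg_mono le_top n
  rwa [cg_lcs, Nat.zero_add] at h1

lemma cg_le_self (X : Subgroup G) (hX : X.Normal) (n : ℕ) : cg X n ≤ X := by
  induction n with
  | zero => exact le_rfl
  | succ n ih =>
    haveI := cg_normal X hX n
    exact (Subgroup.commutator_le_left _ _).trans ih

/-- Three subgroups lemma, inclusion form. -/
lemma three_subgroups (A B C : Subgroup G)
    (hD : (⁅⁅A, B⁆, C⁆ ⊔ ⁅⁅A, C⁆, B⁆).Normal) :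
    ⁅A, ⁅B, C⁆⁆ ≤ ⁅⁅A, B⁆, C⁆ ⊔ ⁅⁅A, C⁆, B⁆ := by
  haveI := hD
  set D := ⁅⁅A, B⁆, C⁆ ⊔ ⁅⁅A, C⁆, B⁆ with hDdef
  let π := QuotientGroup.mk' D
  have key : ∀ X Y : Subgroup G, ⁅X, Y⁆ ≤ D → ⁅X.map π, Y.map π⁆ = ⊥ := by
    intro X Y hXY
    rw [← Subgroup.map_commutator, Subgroup.map_eq_bot_iff, QuotientGroup.ker_mk']
    exact hXY
  have h1 : ⁅⁅C.map π, A.map π⁆, B.map π⁆ = ⊥ := by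
    rw [← Subgroup.map_commutator]
    exact key _ _ (by rw [Subgroup.commutator_comm C A]; exact le_sup_right)
  have h2 : ⁅⁅A.map π, B.map π⁆, C.map π⁆ = ⊥ := by
    rw [← Subgroup.map_commutator]
    exact key _ _ le_sup_left
  have h3 := Subgroup.commutator_commutator_eq_bot_of_rotate h1 h2
  rw [Subgroup.commutator_comm A ⁅B, C⁆]
  have h4 : Subgroup.map π ⁅⁅B, C⁆, A⁆ = ⊥ := by
    rw [Subgroup.map_commutator, Subgroup.map_commutator]
    exact h3
  rw [Subgroup.map_eq_bot_iff, QuotientGroup.ker_mk'] at h4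
  exact h4

lemma comm_sup_le (X Y L : Subgroup G) (hX : X.Normal) (hY : Y.Normal) (hL : L.Normal) :
    ⁅X ⊔ Y, L⁆ ≤ ⁅X, L⁆ ⊔ ⁅Y, L⁆ := by
  haveI := hX; haveI := hY; haveI := hL
  set D := ⁅X, L⁆ ⊔ ⁅Y, L⁆ with hDdef
  let π := QuotientGroup.mk' D
  have key : ∀ W : Subgroup G, ⁅W, L⁆ ≤ D → W.map π ≤ Subgroup.centralizer (L.map π) := by
    intro W hW
    rw [← Subgroup.commutator_eq_bot_iff_le_centralizer, ← Subgroup.map_commutator,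
      Subgroup.map_eq_bot_iff, QuotientGroup.ker_mk']
    exact hW
  have hXc := key X le_sup_left
  have hYc := key Y le_sup_right
  have hsup : (X ⊔ Y).map π ≤ Subgroup.centralizer (L.map π) := by
    rw [Subgroup.map_sup]
    exact sup_le hXc hYc
  rw [← Subgroup.commutator_eq_bot_iff_le_centralizer, ← Subgroup.map_commutator,
    Subgroup.map_eq_bot_iff, QuotientGroup.ker_mk'] at hsup
  exact hsup

lemma cg_sup_le : ∀ (t : ℕ) (X Y T : Subgroup G), X.Normal → Y.Normal → T.Normal →
    cg X t ≤ T → cg Y t ≤ T → cg (X ⊔ Y) t ≤ T := by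
  intro t
  induction t with
  | zero => intro X Y T _ _ _ hX hY; exact sup_le hX hY
  | succ t ih =>
    intro X Y T hX hY hT hXt hYt
    haveI := hX; haveI := hY
    have h1 : cg (X ⊔ Y) (t + 1) = cg ⁅X ⊔ Y, (⊤ : Subgroup G)⁆ t := (cg_shift _ t).symm
    have h2 : cg ⁅X ⊔ Y, (⊤ : Subgroup G)⁆ t ≤ cg (⁅X, (⊤ : Subgroup G)⁆ ⊔ ⁅Y, (⊤ : Subgroup G)⁆) t :=
      cg_mono (comm_sup_le X Y ⊤ hX hY inferInstance) t
    have h3 : cg ⁅X, (⊤ : Subgroup G)⁆ t ≤ T := by rw [cg_shift]; exact hXt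
    have h4 : cg ⁅Y, (⊤ : Subgroup G)⁆ t ≤ T := by rw [cg_shift]; exact hYt
    rw [h1]
    exact h2.trans (ih _ _ T inferInstance inferInstance hT h3 h4)

/-- "Derivation" lemma: `[[A,B], G, ..., G] (t times)` is controlled by commutators
`[[A,G,...,G],[B,G,...,G]]` with the `G`'s distributed. -/
lemma deriv : ∀ (t : ℕ) (A B T : Subgroup G), A.Normal → B.Normal → T.Normal →
    (∀ p q : ℕ, p + q = t → ⁅cg A p, cg B q⁆ ≤ T) → cg ⁅A, B⁆ t ≤ T := by
  intro t
  induction t with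
  | zero => intro A B T _ _ _ h; exact h 0 0 rfl
  | succ t ih =>
    intro A B T hA hB hT h
    haveI := hA; haveI := hB; haveI := hT
    have h3 : ⁅⁅A, B⁆, (⊤ : Subgroup G)⁆ ≤ ⁅⁅A, (⊤ : Subgroup G)⁆, B⁆ ⊔ ⁅⁅B, (⊤ : Subgroup G)⁆, A⁆ := by
      have := three_subgroups (⊤ : Subgroup G) A B inferInstance
      rw [Subgroup.commutator_comm ⁅A, B⁆ (⊤ : Subgroup G)]
      calc ⁅(⊤ : Subgroup G), ⁅A, B⁆⁆ ≤ ⁅⁅(⊤ : Subgroup G), A⁆, B⁆ ⊔ ⁅⁅(⊤ : Subgroup G), B⁆, A⁆ := this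
        _ = ⁅⁅A, (⊤ : Subgroup G)⁆, B⁆ ⊔ ⁅⁅B, (⊤ : Subgroup G)⁆, A⁆ := by
            rw [Subgroup.commutator_comm (⊤ : Subgroup G) A, Subgroup.commutator_comm (⊤ : Subgroup G) B]
    have e1 : cg ⁅A, B⁆ (t + 1) = cg ⁅⁅A, B⁆, (⊤ : Subgroup G)⁆ t := (cg_shift _ t).symm
    have hL : cg ⁅⁅A, (⊤ : Subgroup G)⁆, B⁆ t ≤ T := by
      refine ih ⁅A, (⊤ : Subgroup G)⁆ B T inferInstance hB hT ?_
      intro p q hpq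
      rw [cg_shift]
      exact h (p + 1) q (by omega)
    have hR : cg ⁅⁅B, (⊤ : Subgroup G)⁆, A⁆ t ≤ T := by
      refine ih ⁅B, (⊤ : Subgroup G)⁆ A T inferInstance hA hT ?_
      intro p q hpq
      rw [cg_shift, Subgroup.commutator_comm]
      exact h q (p + 1) (by omega)
    rw [e1]
    exact (cg_mono h3 t).trans
      (cg_sup_le t _ _ T inferInstance inferInstance hT hL hR)

/-- The lower central series of `N`, as subgroups of `G`. -/
def FN (N : Subgroup G) : ℕ → Subgroup G
  | 0 => N
  | i + 1 => ⁅FN N i, N⁆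

variable (N : Subgroup G)

@[simp] lemma FN_zero : FN N 0 = N := rfl

@[simp] lemma FN_succ (i : ℕ) : FN N (i + 1) = ⁅FN N i, N⁆ := rfl

lemma FN_normal (hN : N.Normal) : ∀ i, (FN N i).Normal := by
  intro i
  induction i with
  | zero => exact hN
  | succ i ih => exact @Subgroup.commutator_normal _ _ _ N ih hN

lemma FN_le (hN : N.Normal) (i : ℕ) : FN N i ≤ N := by
  haveI := hN
  induction i with
  | zero => exact le_rfl
  | succ i ih => exact Subgroup.commutator_le_right _ _

lemma keyF (hN : N.Normal) : ∀ (j i : ℕ), ⁅FN N i, FN N j⁆ ≤ FN N (i + j + 1) := by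
  haveI := hN
  intro j
  induction j with
  | zero => intro i; exact le_of_eq rfl
  | succ j ih =>
    intro i
    haveI := FN_normal N hN
    have h3 : ⁅FN N i, ⁅FN N j, N⁆⁆ ≤ ⁅⁅FN N i, FN N j⁆, N⁆ ⊔ ⁅⁅FN N i, N⁆, FN N j⁆ :=
      three_subgroups _ _ _ inferInstance
    have hL : ⁅⁅FN N i, FN N j⁆, N⁆ ≤ FN N (i + j + 2) :=
      Subgroup.commutator_mono (ih i) le_rfl
    have hR : ⁅⁅FN N i, N⁆, FN N j⁆ ≤ FN N (i + j + 2) := by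
      have := ih (i + 1)
      have e : i + 1 + j + 1 = i + j + 2 := by omega
      rw [e] at this
      exact this
    have e2 : i + (j + 1) + 1 = i + j + 2 := by omega
    rw [FN_succ, e2]
    exact h3.trans (sup_le hL hR)

/-- **P. Hall's nilpotency criterion**: if `N ⊴ G` is nilpotent and `G/N'` is nilpotent
(expressed as: some term of the lower central series of `G` is contained in `[N,N]`),
then `G` is nilpotent. -/
theorem hall (hN : N.Normal) (hNnil : Group.IsNilpotent ↥N)
    (d : ℕ) (hd : Subgroup.lowerCentralSeries (⊤ : Subgroup G) d ≤ ⁅N, N⁆) : Group.IsNilpotent G := by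
  haveI := hN
  haveI := FN_normal N hN
  obtain ⟨c, hc⟩ := Subgroup.nilpotent_iff_lowerCentralSeries.mp hNnil
  have hmap : ∀ n, (Subgroup.lowerCentralSeries (⊤ : Subgroup ↥N) n).map N.subtype = FN N n := by
    intro n
    induction n with
    | zero =>
      rw [Subgroup.lowerCentralSeries_zero, ← MonoidHom.range_eq_map]
      exact N.range_subtype
    | succ n ih =>
      rw [lcs_succ_eq, Subgroup.map_commutator, ih, FN_succ, ← MonoidHom.range_eq_map,
        N.range_subtype]
  have hFc : FN N c = ⊥ := by rw [← hmap c, hc, Subgroup.map_bot]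
  have claim : ∀ i, ∃ m, Subgroup.lowerCentralSeries (⊤ : Subgroup G) m ≤ FN N (i + 1) := by
    intro i
    induction i with
    | zero => exact ⟨d, hd⟩
    | succ i ih =>
      obtain ⟨s, hs⟩ := ih
      refine ⟨s + (s + d), ?_⟩
      have hderiv : cg ⁅FN N i, N⁆ (s + d) ≤ FN N (i + 2) := by
        refine deriv (s + d) (FN N i) N (FN N (i + 2)) inferInstance hN inferInstance ?_
        intro p q hpq
        rcases le_or_gt s p with hp | hp
        · have h1 : cg (FN N i) p ≤ FN N (i + 1) :=
            (cg_le_lcs _ p).trans ((Subgroup.lowerCentralSeries_antitone _ hp).trans hs)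
          have h2 : cg N q ≤ N := cg_le_self N hN q
          exact (Subgroup.commutator_mono h1 h2).trans (le_of_eq rfl)
        · have hq : d ≤ q := by omega
          have h1 : cg N q ≤ FN N 1 :=
            (cg_le_lcs _ q).trans ((Subgroup.lowerCentralSeries_antitone _ hq).trans hd)
          have h2 : cg (FN N i) p ≤ FN N i := cg_le_self _ inferInstance p
          have h3 : ⁅FN N i, FN N 1⁆ ≤ FN N (i + 2) := keyF N hN 1 i
          exact (Subgroup.commutator_mono h2 h1).trans h3
      calc Subgroup.lowerCentralSeries (⊤ : Subgroup G) (s + (s + d))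
          = cg (Subgroup.lowerCentralSeries (⊤ : Subgroup G) s) (s + d) := (cg_lcs s (s + d)).symm
        _ ≤ cg (FN N (i + 1)) (s + d) := cg_mono hs _
        _ ≤ FN N (i + 2) := hderiv
  obtain ⟨m, hm⟩ := claim c
  rw [Subgroup.nilpotent_iff_lowerCentralSeries]
  refine ⟨m, le_bot_iff.mp ?_⟩
  have : FN N (c + 1) = ⊥ := by rw [FN_succ, hFc, Subgroup.commutator_bot_left]
  rwa [this] at hm

end HallAux

/-- If `G` has exactly two non-nilpotent subgroups `G` and `K`, and `G' < K`, then `G` is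
solvable and `G/G''` is not nilpotent. -/
theorem stmt3 {G : Type*} [Group G] (K : Subgroup G) (h : ExactlyTwoNonNilpotent K)
    (hK : commutator G < K) :
    IsSolvable G ∧ ¬ Group.IsNilpotent (G ⧸ derivedSeries G 2) := by
  obtain ⟨hG, hKt, hKn, hcl⟩ := h
  have hNnil : Group.IsNilpotent ↥(commutator G) := by
    by_contra hc
    rcases hcl _ hc with h1 | h1
    · exact (h1 ▸ hK).2 le_top
    · exact hK.ne h1
  have hle : ∀ k, derivedSeries G (k + 1) ≤
      Subgroup.map (commutator G).subtype (derivedSeries ↥(commutator G) k) := by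
    intro k
    induction k with
    | zero =>
      rw [derivedSeries_one, derivedSeries_zero, ← MonoidHom.range_eq_map,
        (commutator G).range_subtype]
    | succ k ih =>
      rw [derivedSeries_succ]
      calc ⁅derivedSeries G (k + 1), derivedSeries G (k + 1)⁆
          ≤ ⁅Subgroup.map (commutator G).subtype (derivedSeries ↥(commutator G) k),
              Subgroup.map (commutator G).subtype (derivedSeries ↥(commutator G) k)⁆ :=
            Subgroup.commutator_mono ih ih
        _ = Subgroup.map (commutator G).subtype (derivedSeries ↥(commutator G) (k + 1)) := by
            rw [derivedSeries_succ, Subgroup.map_commutator]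
  constructor
  · haveI := hNnil
    haveI : Group.IsSolvable ↥(commutator G) := inferInstance
    obtain ⟨n, hn⟩ := this.solvable
    refine ⟨⟨n + 1, le_bot_iff.mp ?_⟩⟩
    have := hle n
    rwa [hn, Subgroup.map_bot] at this
  · intro hnil
    obtain ⟨d, hdq⟩ := nilpotent_iff_lowerCentralSeries.mp hnil
    have hd : lowerCentralSeries (⊤ : Subgroup G) d ≤ ⁅commutator G, commutator G⁆ := by
      have h2 : derivedSeries G 2 = ⁅commutator G, commutator G⁆ := by
        rw [derivedSeries_succ, derivedSeries_one]
      have hmap := lowerCentralSeries.map (QuotientGroup.mk' (derivedSeries G 2)) d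
      rw [hdq] at hmap
      have := le_bot_iff.mp hmap
      rw [Subgroup.map_eq_bot_iff, QuotientGroup.ker_mk'] at this
      rwa [← h2]
    exact hG (HallAux.hall (commutator G) inferInstance hNnil d hd)
end

section
/- Let G be a group with exactly two non-nilpotent subgroups G and K, where G' < K. Then the quotient G/G'' also has exactly two non-nilpotent subgroups, namely G/G'' and K/G''. -/
open Subgroup
open scoped commutatorElement

namespace HallAux

variable {G : Type*} [Group G]

/-- The set of elements whose commutators with `L` land in a normal subgroup `M`
forms a subgroup. -/
def commSub (L M : Subgroup G) (hM : M.Normal) : Subgroup G where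
  carrier := {g | ∀ l ∈ L, ⁅g, l⁆ ∈ M}
  one_mem' := by intro l hl; simpa using M.one_mem
  mul_mem' := by
    intro a b ha hb l hl
    have key : ⁅a * b, l⁆ = a * ⁅b, l⁆ * a⁻¹ * ⁅a, l⁆ := by group
    rw [key]
    exact M.mul_mem (hM.conj_mem _ (hb l hl) a) (ha l hl)
  inv_mem' := by
    intro a ha l hl
    have key : ⁅a⁻¹, l⁆ = a⁻¹ * ⁅a, l⁆⁻¹ * a := by group
    rw [key]
    simpa using hM.conj_mem _ (M.inv_mem (ha l hl)) a⁻¹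

theorem sup_comm_le {H K L M : Subgroup G} [hM : M.Normal]
    (h1 : ⁅H, L⁆ ≤ M) (h2 : ⁅K, L⁆ ≤ M) : ⁅H ⊔ K, L⁆ ≤ M := by
  rw [commutator_le] at *
  have : H ⊔ K ≤ commSub L M hM :=
    sup_le (fun g hg l hl => h1 g hg l hl) (fun g hg l hl => h2 g hg l hl)
  exact fun g hg l hl => this hg l hl

theorem iSup_comm_le {ι : Sort*} {X : ι → Subgroup G} {L M : Subgroup G} [hM : M.Normal]
    (h : ∀ i, ⁅X i, L⁆ ≤ M) : ⁅⨆ i, X i, L⁆ ≤ M := by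
  simp_rw [commutator_le] at *
  have : (⨆ i, X i) ≤ commSub L M hM :=
    iSup_le (fun i g hg l hl => h i g hg l hl)
  exact fun g hg l hl => this hg l hl

/-- Three subgroups lemma, inequality version. -/
theorem three_subgroups_le {H K L M : Subgroup G} [M.Normal]
    (h1 : ⁅⁅K, L⁆, H⁆ ≤ M) (h2 : ⁅⁅L, H⁆, K⁆ ≤ M) : ⁅⁅H, K⁆, L⁆ ≤ M := by
  set π := QuotientGroup.mk' M
  have key : ∀ {A B C : Subgroup G}, ⁅⁅A, B⁆, C⁆ ≤ M →
      ⁅⁅A.map π, B.map π⁆, C.map π⁆ = ⊥ := by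
    intro A B C hABC
    rw [← map_commutator, ← map_commutator, Subgroup.map_eq_bot_iff,
      QuotientGroup.ker_mk']
    exact hABC
  have h3 := commutator_commutator_eq_bot_of_rotate (key h1) (key h2)
  rw [← map_commutator, ← map_commutator, Subgroup.map_eq_bot_iff,
    QuotientGroup.ker_mk'] at h3
  exact h3

theorem normal_iSup {ι : Sort*} {X : ι → Subgroup G} (h : ∀ i, (X i).Normal) :
    (⨆ i, X i).Normal := by
  constructor
  intro n hn g
  have : Subgroup.map (MulAut.conj g).toMonoidHom (⨆ i, X i) = ⨆ i, X i := by
    rw [Subgroup.map_iSup]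
    congr 1
    funext i
    have := (h i).conj_mem
    ext x
    constructor
    · rintro ⟨y, hy, rfl⟩
      exact (h i).conj_mem y hy g
    · intro hx
      exact ⟨g⁻¹ * x * g, by simpa using (h i).conj_mem x hx g⁻¹, by simp [MulAut.conj]; group⟩
  rw [← this]
  exact ⟨n, hn, rfl⟩

theorem lcs_map_of_surjective {G' : Type*} [Group G'] (f : G →* G')
    (hf : Function.Surjective f) (n : ℕ) :
    (Subgroup.lowerCentralSeries (⊤ : Subgroup G) n).map f = Subgroup.lowerCentralSeries (⊤ : Subgroup G') n := by
  induction n with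
  | zero => simpa using Subgroup.map_top_of_surjective f hf
  | succ n ih =>
    show Subgroup.map f ⁅Subgroup.lowerCentralSeries (⊤ : Subgroup G) n, ⊤⁆ = ⁅Subgroup.lowerCentralSeries (⊤ : Subgroup G') n, ⊤⁆
    rw [map_commutator, ih, Subgroup.map_top_of_surjective f hf]

set_option linter.unusedSectionVars false


section Gam
variable (N : Subgroup G) [hNn : N.Normal]

/-- The lower central series of `N`, viewed as subgroups of `G`. -/
def gam (n : ℕ) : Subgroup G := (Subgroup.lowerCentralSeries (⊤ : Subgroup ↥N) n).map N.subtype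

theorem gam_zero : gam N 0 = N := by
  simp [gam, ← MonoidHom.range_eq_map, N.range_subtype]

theorem gam_succ (n : ℕ) : gam N (n + 1) = ⁅gam N n, N⁆ := by
  show Subgroup.map N.subtype ⁅Subgroup.lowerCentralSeries (⊤ : Subgroup ↥N) n, ⊤⁆ = _
  rw [map_commutator, ← MonoidHom.range_eq_map, N.range_subtype]
  rfl

theorem gam_le (n : ℕ) : gam N n ≤ N := by
  rintro x ⟨y, -, rfl⟩
  exact y.2

theorem gam_normal (n : ℕ) : (gam N n).Normal := by
  induction n with
  | zero => rw [gam_zero]; exact hNn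
  | succ n ih => rw [gam_succ]; exact @Subgroup.commutator_normal _ _ _ _ ih hNn

theorem gam_succ_le (n : ℕ) : gam N (n + 1) ≤ gam N n := by
  haveI := gam_normal N n
  rw [gam_succ]
  exact commutator_le_left _ _

theorem gam_one : gam N 1 = ⁅N, N⁆ := by rw [gam_succ, gam_zero]

theorem gam_comm_one (m : ℕ) : ⁅gam N m, gam N 1⁆ ≤ gam N (m + 2) := by
  haveI := gam_normal N (m + 2)
  rw [gam_one]
  have h1 : ⁅⁅N, gam N m⁆, N⁆ ≤ gam N (m + 2) := by
    rw [commutator_comm N (gam N m), ← gam_succ, ← gam_succ]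
  have h2 : ⁅⁅gam N m, N⁆, N⁆ ≤ gam N (m + 2) := by
    rw [← gam_succ, ← gam_succ]
  calc ⁅gam N m, ⁅N, N⁆⁆ = ⁅⁅N, N⁆, gam N m⁆ := commutator_comm _ _
    _ ≤ gam N (m + 2) := three_subgroups_le h1 h2

theorem gam_bot (hN : Group.IsNilpotent ↥N) : ∃ c : ℕ, gam N c = ⊥ := by
  obtain ⟨c, hc⟩ := Subgroup.nilpotent_iff_lowerCentralSeries.mp hN
  exact ⟨c, by rw [gam, hc, Subgroup.map_bot]⟩

end Gam
section AB
variable (N : Subgroup G) [hNn : N.Normal]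

/-- A `G`-central series from `N` down to `N'`. -/
def Aa (j : ℕ) : Subgroup G := (Subgroup.lowerCentralSeries (⊤ : Subgroup G) j ⊓ N) ⊔ gam N 1

theorem Aa_normal (j : ℕ) : (Aa N j).Normal := by
  haveI := gam_normal N 1
  exact @Subgroup.sup_normal _ _ _ _ (Subgroup.normal_inf_normal _ _) _

theorem Aa_le (j : ℕ) : Aa N j ≤ N :=
  sup_le (inf_le_right) (gam_le N 1)

theorem Aa_zero : Aa N 0 = N := by
  rw [Aa, Subgroup.lowerCentralSeries_zero, top_inf_eq]
  exact sup_eq_left.mpr (gam_le N 1)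

theorem gam_one_le_Aa (j : ℕ) : gam N 1 ≤ Aa N j := le_sup_right

theorem Aa_anti : Antitone (Aa N) := fun _ _ h =>
  sup_le_sup_right (inf_le_inf_right _ (Subgroup.lowerCentralSeries_antitone _ h)) _

theorem Aa_comm (j : ℕ) : ⁅Aa N j, (⊤ : Subgroup G)⁆ ≤ Aa N (j + 1) := by
  haveI := Aa_normal N (j + 1)
  haveI := gam_normal N 1
  apply sup_comm_le
  · refine le_trans (le_inf ?_ ?_) le_sup_left
    · exact (commutator_mono inf_le_left le_rfl).trans le_rfl
    · exact (commutator_mono inf_le_right le_rfl).trans (commutator_le_left _ _)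
  · exact (commutator_le_left _ _).trans le_sup_right

theorem Aa_high {e j : ℕ} (he : Subgroup.lowerCentralSeries (⊤ : Subgroup G) e ≤ gam N 1) (hj : e ≤ j) :
    Aa N j ≤ gam N 1 :=
  sup_le (inf_le_left.trans ((Subgroup.lowerCentralSeries_antitone _ hj).trans he)) le_rfl

/-- The Hall filtration: `Bb N i s` is (a stand-in for) the subgroup generated by
left-normed commutators of `i+1` of the `Aa`-subgroups of total extra weight `≥ s`,
sitting between `gam N i` and `gam N (i+1)`. -/
def Bb : ℕ → ℕ → Subgroup G
  | 0, s => Aa N s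
  | i + 1, s => ⨆ t : Fin (s + 1), ⁅Bb i t, Aa N (s - t)⁆

theorem Bb_le_gam (i s : ℕ) : Bb N i s ≤ gam N i := by
  induction i generalizing s with
  | zero => rw [gam_zero]; exact Aa_le N s
  | succ i ih =>
    refine iSup_le fun t => ?_
    rw [gam_succ]
    exact commutator_mono (ih t) (Aa_le N _)

theorem Bb_normal (i s : ℕ) : (Bb N i s).Normal := by
  induction i generalizing s with
  | zero => exact Aa_normal N s
  | succ i ih =>
    exact normal_iSup fun t =>
      @Subgroup.commutator_normal _ _ _ _ (ih t) (Aa_normal N _)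

theorem le_Bb_succ {i s t : ℕ} (h : t ≤ s) : ⁅Bb N i t, Aa N (s - t)⁆ ≤ Bb N (i + 1) s :=
  le_iSup (fun t : Fin (s + 1) => ⁅Bb N i t, Aa N (s - t)⁆) ⟨t, Nat.lt_succ_of_le h⟩

theorem Bb_anti (i : ℕ) : Antitone (Bb N i) := by
  induction i with
  | zero => exact Aa_anti N
  | succ i ih =>
    refine antitone_nat_of_succ_le fun s => iSup_le fun t => ?_
    rcases Nat.lt_succ_iff_lt_or_eq.mp t.2 with ht | ht
    · have ht' : (t : ℕ) ≤ s := Nat.lt_succ_iff.mp ht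
      exact le_trans (commutator_mono le_rfl (Aa_anti N (Nat.sub_le_sub_right (Nat.le_succ s) t)))
        (le_Bb_succ N ht')
    · have h1 : Bb N i t ≤ Bb N i s := ih (by omega)
      have h2 : Aa N (s + 1 - t) = Aa N (s - s) := by
        have : s + 1 - (t : ℕ) = 0 := by omega
        have : s - s = 0 := by omega
        simp_all
      exact h2 ▸ le_trans (commutator_mono h1 le_rfl) (le_Bb_succ N le_rfl)

theorem gam_le_Bb (i : ℕ) : gam N i ≤ Bb N i 0 := by
  induction i with
  | zero => rw [gam_zero, Bb, Aa_zero]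
  | succ i ih =>
    rw [gam_succ]
    have : ⁅Bb N i 0, Aa N (0 - 0)⁆ ≤ Bb N (i + 1) 0 := le_Bb_succ N le_rfl
    rw [Nat.sub_self, Aa_zero] at this
    exact le_trans (commutator_mono ih le_rfl) this

theorem Bb_comm (i s : ℕ) :
    ⁅Bb N i s, (⊤ : Subgroup G)⁆ ≤ Bb N i (s + 1) ⊔ gam N (i + 1) := by
  induction i generalizing s with
  | zero =>
    exact le_trans (Aa_comm N s) le_sup_left
  | succ i ih =>
    haveI := Bb_normal N (i + 1) (s + 1)
    haveI := gam_normal N (i + 2)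
    refine iSup_comm_le fun t => ?_
    -- term ⁅⁅Bb i t, Aa (s - t)⁆, ⊤⁆
    have htle : (t : ℕ) ≤ s := Nat.lt_succ_iff.mp t.2
    have h1 : ⁅⁅Aa N (s - t), (⊤ : Subgroup G)⁆, Bb N i t⁆ ≤
        Bb N (i + 1) (s + 1) ⊔ gam N (i + 2) := by
      haveI := Bb_normal N i t
      haveI := Aa_normal N (s + 1 - t)
      refine le_trans (le_trans (commutator_mono (Aa_comm N _) le_rfl) ?_) le_sup_left
      rw [commutator_comm]
      have : (s : ℕ) - t + 1 = s + 1 - t := by omega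
      rw [this]
      exact le_Bb_succ N (htle.trans (Nat.le_succ s))
    have h2 : ⁅⁅(⊤ : Subgroup G), Bb N i t⁆, Aa N (s - t)⁆ ≤
        Bb N (i + 1) (s + 1) ⊔ gam N (i + 2) := by
      haveI := Bb_normal N i t
      haveI := Bb_normal N i (t + 1)
      haveI := gam_normal N (i + 1)
      rw [commutator_comm (⊤ : Subgroup G) (Bb N i t)]
      refine le_trans (commutator_mono (ih t) le_rfl) ?_
      refine sup_comm_le ?_ ?_
      · have : (s : ℕ) - t = s + 1 - (t + 1) := by omega
        rw [this]
        exact le_trans (le_Bb_succ N (by omega)) le_sup_left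
      · exact le_trans (le_trans (commutator_mono le_rfl (Aa_le N _)) (by rw [← gam_succ]))
          le_sup_right
    exact three_subgroups_le h1 h2

theorem Bb_high {e : ℕ} (he : Subgroup.lowerCentralSeries (⊤ : Subgroup G) e ≤ gam N 1) {i s : ℕ}
    (hs : (i + 1) * e ≤ s) : Bb N i s ≤ gam N (i + 1) := by
  induction i generalizing s with
  | zero =>
    rw [gam_one, ← gam_one N]
    exact Aa_high N he (by omega)
  | succ i ih =>
    refine iSup_le fun t => ?_
    by_cases ht : (i + 1) * e ≤ (t : ℕ)
    · rw [gam_succ]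
      exact commutator_mono (ih ht) (Aa_le N _)
    · have hse : e ≤ s - t := by
        have h2 : (i + 1 + 1) * e = (i + 1) * e + e := by ring
        have h3 := t.2
        omega
      refine le_trans (commutator_mono (Bb_le_gam N i t) (Aa_high N he hse)) ?_
      exact gam_comm_one N i

end AB

/-- **P. Hall's nilpotency criterion.** If `N` is a nilpotent normal subgroup of `G` and
`G ⧸ [N,N]` is nilpotent, then `G` is nilpotent. -/
theorem hall_criterion (N : Subgroup G) [hNn : N.Normal] (hN : Group.IsNilpotent ↥N)
    (hQ : Group.IsNilpotent (G ⧸ ⁅N, N⁆)) : Group.IsNilpotent G := by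
  obtain ⟨c, hc⟩ := gam_bot N hN
  obtain ⟨e, he'⟩ := Subgroup.nilpotent_iff_lowerCentralSeries.mp hQ
  have he : Subgroup.lowerCentralSeries (⊤ : Subgroup G) e ≤ gam N 1 := by
    rw [gam_one]
    have := lcs_map_of_surjective (QuotientGroup.mk' ⁅N, N⁆)
      (QuotientGroup.mk'_surjective _) e
    rw [he', Subgroup.map_eq_bot_iff, QuotientGroup.ker_mk'] at this
    exact this
  have key : ∀ i : ℕ, ∃ n : ℕ, Subgroup.lowerCentralSeries (⊤ : Subgroup G) n ≤ gam N (i + 1) := by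
    intro i
    induction i with
    | zero => exact ⟨e, he⟩
    | succ i ih =>
      obtain ⟨n, hn⟩ := ih
      have step : ∀ s : ℕ, Subgroup.lowerCentralSeries (⊤ : Subgroup G) (n + s) ≤ Bb N (i + 1) s ⊔ gam N (i + 2) := by
        intro s
        induction s with
        | zero => exact le_trans hn (le_trans (gam_le_Bb N (i + 1)) le_sup_left)
        | succ s ihs =>
          haveI := Bb_normal N (i + 1) (s + 1)
          haveI := gam_normal N (i + 2)
          show ⁅Subgroup.lowerCentralSeries (⊤ : Subgroup G) (n + s), ⊤⁆ ≤ _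
          refine le_trans (commutator_mono ihs le_rfl) ?_
          refine sup_comm_le ?_ ?_
          · exact le_trans (Bb_comm N (i + 1) s) (sup_le_sup_left le_rfl _ |>.trans
              (sup_le (le_sup_left) le_sup_right))
          · exact le_trans (commutator_le_left _ _) le_sup_right
      refine ⟨n + (i + 2) * e, ?_⟩
      refine le_trans (step ((i + 2) * e)) (sup_le ?_ le_rfl)
      exact Bb_high N he le_rfl
  obtain ⟨n, hn⟩ := key c
  rw [Subgroup.nilpotent_iff_lowerCentralSeries]
  exact ⟨n, le_bot_iff.mp (le_trans hn (le_trans (gam_succ_le N c) hc.le))⟩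

end HallAux


/-- If `G` has exactly two non-nilpotent subgroups `G` and `K` with `G' < K`, then `G/G''`
has exactly two non-nilpotent subgroups, namely `G/G''` and `K/G''`. -/
theorem stmt4 {G : Type*} [Group G] (K : Subgroup G) (h : ExactlyTwoNonNilpotent K)
    (hK : commutator G < K) :
    ExactlyTwoNonNilpotent (K.map (QuotientGroup.mk' (derivedSeries G 2))) := by
  obtain ⟨hGn, hKtop, hKn, hclass⟩ := h
  set π := QuotientGroup.mk' (derivedSeries G 2) with hπ
  have hπsurj : Function.Surjective π := QuotientGroup.mk'_surjective _
  have hD2 : derivedSeries G 2 = ⁅commutator G, commutator G⁆ := by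
    show derivedSeries G (1 + 1) = _
    rw [derivedSeries_succ, derivedSeries_one]
  have hD2le : derivedSeries G 2 ≤ commutator G := by
    rw [hD2]; exact Subgroup.commutator_le_left _ _
  have hD2leK : derivedSeries G 2 ≤ K := hD2le.trans hK.le
  -- the commutator subgroup is nilpotent
  have hCn : Group.IsNilpotent ↥(commutator G) := by
    by_contra hc
    rcases hclass _ hc with h1 | h1
    · rw [h1] at hK
      exact absurd (hK.trans_le le_top) (lt_irrefl _)
    · exact hK.ne h1
  -- K/G'' is not nilpotent
  have hKbar : ¬ Group.IsNilpotent ↥(K.map π) := by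
    intro hnil
    apply hKn
    -- work inside K, using Hall's criterion with N = (commutator G).subgroupOf K
    set N' : Subgroup ↥K := (commutator G).subgroupOf K with hN'
    haveI : N'.Normal := Subgroup.normal_subgroupOf
    have hN'n : Group.IsNilpotent ↥N' := by
      haveI := hCn
      exact nilpotent_of_mulEquiv (Subgroup.subgroupOfEquivOfLe hK.le).symm
    have hcommN' : ⁅N', N'⁆ = (derivedSeries G 2).subgroupOf K := by
      apply Subgroup.map_injective K.subtype_injective
      rw [Subgroup.map_commutator, hN', Subgroup.subgroupOf_map_subtype,
        Subgroup.subgroupOf_map_subtype, inf_eq_left.mpr hK.le,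
        inf_eq_left.mpr hD2leK, hD2]
    set φ : ↥K →* G ⧸ derivedSeries G 2 := π.comp K.subtype with hφ
    have hker : φ.ker = ⁅N', N'⁆ := by
      rw [hcommN', hφ, ← MonoidHom.comap_ker, hπ, QuotientGroup.ker_mk',
        Subgroup.comap_subtype]
    have hrange : φ.range = K.map π := by
      rw [hφ, MonoidHom.range_comp, K.range_subtype]
    have hQnil : Group.IsNilpotent (↥K ⧸ ⁅N', N'⁆) := by
      haveI : Group.IsNilpotent ↥φ.range :=
        nilpotent_of_mulEquiv (MulEquiv.subgroupCongr hrange.symm)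
      haveI : Group.IsNilpotent (↥K ⧸ φ.ker) :=
        nilpotent_of_mulEquiv (QuotientGroup.quotientKerEquivRange φ).symm
      exact nilpotent_of_mulEquiv (QuotientGroup.quotientMulEquivOfEq hker)
    exact HallAux.hall_criterion N' hN'n hQnil
  refine ⟨?_, ?_, hKbar, ?_⟩
  · intro hnil
    exact hKbar (Subgroup.isNilpotent _)
  · refine lt_top_iff_ne_top.mpr fun htop => ?_
    have : Subgroup.comap π (K.map π) = Subgroup.comap π ⊤ := by rw [htop]
    rw [Subgroup.comap_map_eq, Subgroup.comap_top, hπ, QuotientGroup.ker_mk',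
      sup_eq_left.mpr hD2leK] at this
    exact hKtop.ne this
  · intro Hb hHb
    have hmap : (Subgroup.comap π Hb).map π = Hb :=
      Subgroup.map_comap_eq_self_of_surjective hπsurj Hb
    have hHc : ¬ Group.IsNilpotent ↥(Subgroup.comap π Hb) := by
      intro hnil
      apply hHb
      rw [← hmap]
      haveI := hnil
      exact nilpotent_of_surjective (π.subgroupMap _) (π.subgroupMap_surjective _)
    rcases hclass _ hHc with h1 | h1
    · left
      rw [← hmap, h1]
      exact Subgroup.map_top_of_surjective π hπsurj
    · right
      rw [← hmap, h1]
end

section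
/- Let G be a group with exactly two non-nilpotent subgroups G and K (with G' < K), and let M ≠ K be a maximal normal subgroup of G. Then the commutator [K, M] is nontrivial. -/
/-- If `G` has exactly two non-nilpotent subgroups `G` and `K` (with `G' < K`), and `M ≠ K`
is a maximal normal subgroup of `G`, then `[K, M] ≠ 1`. -/
theorem stmt6 {G : Type*} [Group G] (K M : Subgroup G) (h : ExactlyTwoNonNilpotent K)
    (hK : commutator G < K) (hMnorm : M.Normal) (hMprop : M < ⊤)
    (hMmax : ∀ N : Subgroup G, N.Normal → M < N → N = ⊤) (hMK : M ≠ K) :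
    ⁅K, M⁆ ≠ (⊥ : Subgroup G) := by
  intro hbot
  obtain ⟨hGnil, hKlt, hKnil, hclass⟩ := h
  -- elements of K and M commute
  have comm : ∀ k ∈ K, ∀ m ∈ M, k * m = m * k := by
    intro k hk m hm
    open scoped commutatorElement in
    have h1 : ⁅k, m⁆ ∈ (⊥ : Subgroup G) := hbot ▸ Subgroup.commutator_mem_commutator hk hm
    rw [Subgroup.mem_bot, commutatorElement_eq_one_iff_mul_comm] at h1
    exact h1
  -- elements of K ∩ M are central in K
  have hcentK : ∀ z : ↥K, (z : G) ∈ M → z ∈ Subgroup.center ↥K := by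
    intro z hz
    rw [Subgroup.mem_center_iff]
    intro g
    refine Subtype.ext ?_
    push_cast
    exact comm (g : G) g.2 (z : G) hz
  by_cases hGM : commutator G ≤ M
  · -- case 1: G' ≤ M, then K / Z(K) is abelian, so K is nilpotent
    apply hKnil
    apply of_quotient_center_nilpotent
    have habel : ∀ a b : ↥K ⧸ Subgroup.center ↥K, a * b = b * a := by
      intro a b
      refine QuotientGroup.induction_on a fun x => QuotientGroup.induction_on b fun y => ?_
      rw [← QuotientGroup.mk_mul, ← QuotientGroup.mk_mul, QuotientGroup.eq]
      apply hcentK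
      open scoped commutatorElement in
      have h1 : (((x * y)⁻¹ * (y * x) : ↥K) : G) = ⁅(y : G)⁻¹, (x : G)⁻¹⁆ := by
        push_cast
        group
      rw [h1]
      exact hGM (Subgroup.commutator_mem_commutator (Subgroup.mem_top _) (Subgroup.mem_top _))
    letI : CommGroup (↥K ⧸ Subgroup.center ↥K) :=
      { (inferInstance : Group (↥K ⧸ Subgroup.center ↥K)) with mul_comm := habel }
    infer_instance
  · -- case 2: G' ⊔ M = ⊤
    have hsup : commutator G ⊔ M = ⊤ := by
      refine hMmax _ inferInstance (lt_of_le_of_ne le_sup_right fun hEq => hGM ?_)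
      rw [hEq]
      exact le_sup_left
    -- every element of K is d * z with d ∈ G', z ∈ M ∩ K
    have hdec : ∀ k : ↥K, ∃ d ∈ commutator G, ∃ z : ↥K, (z : G) ∈ M ∧ (k : G) = d * (z : G) := by
      intro k
      have hmem : (k : G) ∈ ((commutator G ⊔ M : Subgroup G) : Set G) := by
        rw [hsup]; trivial
      rw [Subgroup.normal_mul] at hmem
      obtain ⟨d, hd, z, hz, hdz⟩ := hmem
      have hdK : d ∈ K := hK.le hd
      have hzK : z ∈ K := by
        have : z = d⁻¹ * (k : G) := by rw [← hdz]; group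
        rw [this]
        exact K.mul_mem (K.inv_mem hdK) k.2
      exact ⟨d, hd, ⟨z, hzK⟩, hz, hdz.symm⟩
    -- G' is nilpotent
    have hGnilp : Group.IsNilpotent ↥(commutator G) := by
      by_contra hn
      rcases hclass _ hn with h1 | h1
      · exact absurd (h1 ▸ hK.trans hKlt) (lt_irrefl ⊤)
      · exact hK.ne h1
    -- surjection from G' onto K / Z(K)
    apply hKnil
    apply of_quotient_center_nilpotent
    have hsurj : Function.Surjective
        ((QuotientGroup.mk' (Subgroup.center ↥K)).comp (Subgroup.inclusion hK.le)) := by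
      intro a
      refine QuotientGroup.induction_on a fun x => ?_
      obtain ⟨d, hd, z, hzM, hx⟩ := hdec x
      refine ⟨⟨d, hd⟩, ?_⟩
      simp only [MonoidHom.comp_apply, QuotientGroup.mk'_apply]
      rw [QuotientGroup.eq]
      apply hcentK
      show ((Subgroup.inclusion hK.le ⟨d, hd⟩ : ↥K) : G)⁻¹ * (x : G) ∈ M
      have : ((Subgroup.inclusion hK.le ⟨d, hd⟩ : ↥K) : G) = d := rfl
      rw [this, hx]
      simpa using hzM
    haveI := hGnilp
    exact nilpotent_of_surjective _ hsurj
end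

section
/- Let G be a group with exactly two non-nilpotent subgroups G and K, where K is not finitely generated. Then G is locally nilpotent; in particular every maximal subgroup of G is normal and of prime index. -/
open Subgroup Pointwise
open scoped commutatorElement

universe u

section Aux

/-- A subgroup of a subgroup with nilpotent coercion is nilpotent. -/
lemma ETNN.nilpotent_of_le {G : Type*} [Group G] {A B : Subgroup G} (hAB : A ≤ B)
    (hB : Group.IsNilpotent ↥B) : Group.IsNilpotent ↥A := by
  haveI := hB
  exact nilpotent_of_mulEquiv (Subgroup.subgroupOfEquivOfLe hAB)

/-- commutator elements are unchanged by central factors -/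
lemma ETNN.commElt_mul_center {F : Type u} [Group F] {z w : F}
    (hz : z ∈ Subgroup.center F) (hw : w ∈ Subgroup.center F) (x y : F) :
    ⁅x * z, y * w⁆ = ⁅x, y⁆ := by
  have hz' := Subgroup.mem_center_iff.mp hz
  have hw' := Subgroup.mem_center_iff.mp hw
  have step1 : ∀ v : F, ⁅x * z, v⁆ = ⁅x, v⁆ := by
    intro v
    calc ⁅x * z, v⁆ = x * (z * v) * z⁻¹ * x⁻¹ * v⁻¹ := by
          rw [commutatorElement_def]; group
      _ = x * (v * z) * z⁻¹ * x⁻¹ * v⁻¹ := by rw [← hz' v]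
      _ = x * v * x⁻¹ * v⁻¹ := by group
      _ = ⁅x, v⁆ := (commutatorElement_def x v).symm
  have step2 : ⁅x, y * w⁆ = ⁅x, y⁆ := by
    calc ⁅x, y * w⁆ = x * y * (w * x⁻¹) * w⁻¹ * y⁻¹ := by
          rw [commutatorElement_def]; group
      _ = x * y * (x⁻¹ * w) * w⁻¹ * y⁻¹ := by rw [hw' x⁻¹]
      _ = x * y * x⁻¹ * y⁻¹ := by group
      _ = ⁅x, y⁆ := (commutatorElement_def x y).symm
  rw [step1, step2]

/-- Nongenerating property of the commutator subgroup of a nilpotent group,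
proved by induction on the nilpotency class. -/
lemma ETNN.nongenAux (n : ℕ) : ∀ {F : Type u} [Group F] [Group.IsNilpotent F],
    Group.nilpotencyClass F ≤ n → ∀ T : Subgroup F, T ⊔ commutator F = ⊤ → T = ⊤ := by
  induction n with
  | zero =>
    intro F _ _ hc T _
    have hs : Subsingleton F :=
      _root_.nilpotencyClass_zero_iff_subsingleton.mp (Nat.le_zero.mp hc)
    refine (Subgroup.eq_top_iff' T).mpr fun x => ?_
    simpa [Subsingleton.elim x (1 : F)] using T.one_mem
  | succ n ih =>
    intro F _ _ hc T hT
    set Z := Subgroup.center F with hZdef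
    let π : F →* F ⧸ Z := QuotientGroup.mk' Z
    have hπ : Function.Surjective π := QuotientGroup.mk_surjective
    have hclass : Group.nilpotencyClass (F ⧸ Z) ≤ n := by
      rw [_root_.nilpotencyClass_quotient_center]
      omega
    have hmapcomm : Subgroup.map π (commutator F) = commutator (F ⧸ Z) := by
      rw [_root_.commutator_def, _root_.commutator_def, Subgroup.map_commutator,
        Subgroup.map_top_of_surjective π hπ]
    have hmaptop : Subgroup.map π T ⊔ commutator (F ⧸ Z) = ⊤ := by
      rw [← hmapcomm, ← Subgroup.map_sup, hT, Subgroup.map_top_of_surjective π hπ]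
    have hTtop : Subgroup.map π T = ⊤ := ih hclass _ hmaptop
    have hTZ : T ⊔ Z = ⊤ := by
      have hker : (QuotientGroup.mk' Z).ker = Z := QuotientGroup.ker_mk' Z
      have h1 : Subgroup.comap π (Subgroup.map π T) = T ⊔ Z := by
        rw [Subgroup.comap_map_eq]
        show T ⊔ (QuotientGroup.mk' Z).ker = T ⊔ Z
        rw [hker]
      rw [← h1, hTtop, Subgroup.comap_top]
    -- now commutator F ≤ T
    have hcle : commutator F ≤ T := by
      rw [_root_.commutator_def, Subgroup.commutator_le]
      intro a _ b _
      have ha : a ∈ (T : Set F) * (Z : Set F) := by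
        rw [← Subgroup.mul_normal T Z, hTZ]; trivial
      have hb : b ∈ (T : Set F) * (Z : Set F) := by
        rw [← Subgroup.mul_normal T Z, hTZ]; trivial
      obtain ⟨t1, ht1, z1, hz1, rfl⟩ := ha
      obtain ⟨t2, ht2, z2, hz2, rfl⟩ := hb
      rw [ETNN.commElt_mul_center hz1 hz2 t1 t2]
      have : ⁅t1, t2⁆ = t1 * t2 * t1⁻¹ * t2⁻¹ := commutatorElement_def t1 t2
      rw [this]
      exact mul_mem (mul_mem (mul_mem ht1 ht2) (inv_mem ht1)) (inv_mem ht2)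
    rw [← hT]
    exact (sup_eq_left.mpr hcle).symm

/-- In a nilpotent group, if a subgroup together with the commutator subgroup generates the
whole group, then the subgroup is the whole group. -/
lemma ETNN.nongen {F : Type u} [Group F] [Group.IsNilpotent F] (T : Subgroup F)
    (hT : T ⊔ commutator F = ⊤) : T = ⊤ :=
  ETNN.nongenAux (Group.nilpotencyClass F) le_rfl T hT

/-- In a locally nilpotent group, every maximal subgroup contains the commutator subgroup. -/
lemma ETNN.commutator_le_coatom {G : Type u} [Group G]
    (hloc : ∀ H : Subgroup G, H.FG → Group.IsNilpotent ↥H)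
    {M : Subgroup G} (hM : IsCoatom M) : commutator G ≤ M := by
  rw [_root_.commutator_def, Subgroup.commutator_le]
  intro a _ b _
  by_contra hc
  set c : G := ⁅a, b⁆ with hcdef
  have htop : M ⊔ Subgroup.zpowers c = ⊤ := by
    refine hM.2 _ (left_lt_sup.mpr ?_)
    rw [Subgroup.zpowers_le]
    exact hc
  have hcl : Subgroup.closure ((M : Set G) ∪ {c}) = ⊤ := by
    rw [Subgroup.closure_union, Subgroup.closure_eq, ← Subgroup.zpowers_eq_closure, htop]
  -- get lists expressing a and b as words
  have hmema : a ∈ Submonoid.closure (((M : Set G) ∪ {c}) ∪ ((M : Set G) ∪ {c})⁻¹) := by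
    have : a ∈ (Subgroup.closure ((M : Set G) ∪ {c})).toSubmonoid := by
      rw [hcl]; trivial
    rwa [Subgroup.closure_toSubmonoid] at this
  have hmemb : b ∈ Submonoid.closure (((M : Set G) ∪ {c}) ∪ ((M : Set G) ∪ {c})⁻¹) := by
    have : b ∈ (Subgroup.closure ((M : Set G) ∪ {c})).toSubmonoid := by
      rw [hcl]; trivial
    rwa [Subgroup.closure_toSubmonoid] at this
  obtain ⟨la, hla, hpa⟩ := Submonoid.exists_list_of_mem_closure hmema
  obtain ⟨lb, hlb, hpb⟩ := Submonoid.exists_list_of_mem_closure hmemb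
  -- the finitely generated subgroup
  set S : Set G := insert c ({x | x ∈ la} ∪ {x | x ∈ lb}) with hSdef
  have hSfin : S.Finite := by
    apply Set.Finite.insert
    exact (la.finite_toSet).union (lb.finite_toSet)
  set F : Subgroup G := Subgroup.closure S with hFdef
  have hFfg : F.FG := (Subgroup.fg_iff F).mpr ⟨S, rfl, hSfin⟩
  have hcF : c ∈ F := Subgroup.subset_closure (Set.mem_insert _ _)
  have haF : a ∈ F := by
    rw [← hpa]
    exact Subgroup.list_prod_mem _ fun y hy =>
      Subgroup.subset_closure (Set.mem_insert_iff.mpr (Or.inr (Or.inl hy)))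
  have hbF : b ∈ F := by
    rw [← hpb]
    exact Subgroup.list_prod_mem _ fun y hy =>
      Subgroup.subset_closure (Set.mem_insert_iff.mpr (Or.inr (Or.inr hy)))
  have hcFF : c ∈ ⁅F, F⁆ := Subgroup.commutator_mem_commutator haF hbF
  have hFFle : ⁅F, F⁆ ≤ F := by
    rw [Subgroup.commutator_le]
    intro g1 hg1 g2 hg2
    rw [commutatorElement_def]
    exact mul_mem (mul_mem (mul_mem hg1 hg2) (inv_mem hg1)) (inv_mem hg2)
  -- membership of each generator in the join
  have hgen : ∀ y ∈ S, y ∈ (M ⊓ F) ⊔ ⁅F, F⁆ := by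
    intro y hy
    have hyF : y ∈ F := Subgroup.subset_closure hy
    rcases Set.mem_insert_iff.mp hy with rfl | hy'
    · exact Subgroup.mem_sup_right hcFF
    · have hylist : y ∈ ((M : Set G) ∪ {c}) ∪ ((M : Set G) ∪ {c})⁻¹ := by
        rcases hy' with hy2 | hy2
        · exact hla y hy2
        · exact hlb y hy2
      rcases hylist with hy2 | hy2
      · rcases hy2 with hy3 | hy3
        · exact Subgroup.mem_sup_left (Subgroup.mem_inf.mpr ⟨hy3, hyF⟩)
        · rw [Set.mem_singleton_iff] at hy3
          subst hy3
          exact Subgroup.mem_sup_right hcFF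
      · rw [Set.mem_inv] at hy2
        rcases hy2 with hy3 | hy3
        · have : y⁻¹ ∈ M := hy3
          have hyM : y ∈ M := by simpa using M.inv_mem this
          exact Subgroup.mem_sup_left (Subgroup.mem_inf.mpr ⟨hyM, hyF⟩)
        · rw [Set.mem_singleton_iff] at hy3
          have : y = c⁻¹ := by rw [← hy3]; simp
          subst this
          exact Subgroup.mem_sup_right (inv_mem hcFF)
  have heq : (M ⊓ F) ⊔ ⁅F, F⁆ = F := by
    apply le_antisymm
    · exact sup_le inf_le_right hFFle
    · rw [hFdef, Subgroup.closure_le]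
      exact hgen
  -- transfer into ↥F
  haveI hFnil : Group.IsNilpotent ↥F := hloc F hFfg
  have hkey : ((M ⊓ F).subgroupOf F) ⊔ commutator ↥F = ⊤ := by
    apply Subgroup.map_injective F.subtype_injective
    rw [Subgroup.map_sup, Subgroup.subgroupOf_map_subtype, _root_.commutator_def,
      Subgroup.map_commutator]
    have htop' : Subgroup.map F.subtype ⊤ = F := by
      rw [← MonoidHom.range_eq_map, Subgroup.range_subtype]
    rw [htop']
    rw [show M ⊓ F ⊓ F = M ⊓ F from by rw [inf_assoc, inf_idem]]
    exact heq
  have hMF : (M ⊓ F).subgroupOf F = ⊤ := ETNN.nongen _ hkey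
  have hFM : F ≤ M := le_trans (Subgroup.subgroupOf_eq_top.mp hMF) inf_le_left
  exact hc (hFM hcF)

/-- A subgroup containing the commutator subgroup is normal. -/
lemma ETNN.normal_of_commutator_le {G : Type u} [Group G] {M : Subgroup G}
    (h : commutator G ≤ M) : M.Normal := by
  constructor
  intro n hn g
  have h1 : ⁅g, n⁆ ∈ M := by
    apply h
    rw [_root_.commutator_def]
    exact Subgroup.commutator_mem_commutator (Subgroup.mem_top g) (Subgroup.mem_top n)
  have h2 : g * n * g⁻¹ = ⁅g, n⁆ * n := by
    rw [commutatorElement_def]; group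
  rw [h2]
  exact mul_mem h1 hn

/-- A normal maximal subgroup has prime index. -/
lemma ETNN.prime_index_of_coatom {G : Type u} [Group G] {N : Subgroup G}
    (hN : N.Normal) (hco : IsCoatom N) : ∃ p : ℕ, p.Prime ∧ N.index = p := by
  haveI := hN
  -- every subgroup of the quotient is ⊥ or ⊤
  have hsub : ∀ H : Subgroup (G ⧸ N), H = ⊥ ∨ H = ⊤ := by
    intro H
    have h1 : N ≤ H.comap (QuotientGroup.mk' N) := by
      intro x hx
      have hker : (QuotientGroup.mk' N) x = 1 := by
        rw [← MonoidHom.mem_ker, QuotientGroup.ker_mk']; exact hx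
      rw [Subgroup.mem_comap, hker]
      exact H.one_mem
    have hmapcomap : Subgroup.map (QuotientGroup.mk' N) (H.comap (QuotientGroup.mk' N)) = H :=
      Subgroup.map_comap_eq_self_of_surjective QuotientGroup.mk_surjective H
    rcases h1.lt_or_eq with hlt | heqc
    · right
      have : H.comap (QuotientGroup.mk' N) = ⊤ := hco.2 _ hlt
      rw [← hmapcomap, this, Subgroup.map_top_of_surjective _ QuotientGroup.mk_surjective]
    · left
      rw [← hmapcomap, ← heqc]
      refine le_antisymm ?_ bot_le
      rintro _ ⟨n, hn, rfl⟩
      rw [Subgroup.mem_bot]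
      rw [← MonoidHom.mem_ker, QuotientGroup.ker_mk']
      exact hn
  have genTop : ∀ y : G ⧸ N, y ≠ 1 → Subgroup.zpowers y = ⊤ := by
    intro y hy
    rcases hsub (Subgroup.zpowers y) with h | h
    · exfalso
      have h2 : y ∈ (⊥ : Subgroup (G ⧸ N)) := h ▸ Subgroup.mem_zpowers y
      exact hy (Subgroup.mem_bot.mp h2)
    · exact h
  -- the quotient is nontrivial
  obtain ⟨g, hg⟩ : ∃ g : G, g ∉ N := by
    by_contra hcon
    push_neg at hcon
    exact hco.1 ((Subgroup.eq_top_iff' N).mpr hcon)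
  set x : G ⧸ N := ((g : G) : G ⧸ N) with hxdef
  have hx1 : x ≠ 1 := by
    rw [hxdef, Ne, QuotientGroup.eq_one_iff]; exact hg
  have hxtop : Subgroup.zpowers x = ⊤ := genTop x hx1
  -- a helper: from a power generating everything, get divisibility
  have hpow : ∀ m : ℕ, 0 < m → x ^ m ≠ 1 → ∃ k : ℤ, x ^ ((m : ℤ) * k - 1) = 1 := by
    intro m hm hxm
    have htp : Subgroup.zpowers (x ^ m) = ⊤ := genTop _ hxm
    have hmem : x ∈ Subgroup.zpowers (x ^ m) := by rw [htp]; trivial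
    obtain ⟨k, hk⟩ := Subgroup.mem_zpowers_iff.mp hmem
    refine ⟨k, ?_⟩
    have hk' : x ^ ((m : ℤ) * k) = x := by
      rw [zpow_mul, zpow_natCast]; exact hk
    rw [zpow_sub, hk', zpow_one, mul_inv_cancel]
  -- x has finite order
  have hord : orderOf x ≠ 0 := by
    intro h0
    have hx2 : x ^ (2 : ℕ) ≠ 1 := orderOf_eq_zero_iff'.mp h0 2 (by norm_num)
    obtain ⟨k, hone⟩ := hpow 2 (by norm_num) hx2
    have hdvd : ((orderOf x : ℤ)) ∣ ((2 : ℕ) : ℤ) * k - 1 := orderOf_dvd_iff_zpow_eq_one.mpr hone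
    rw [h0] at hdvd
    simp only [Nat.cast_zero, zero_dvd_iff, sub_eq_zero] at hdvd
    omega
  set n : ℕ := orderOf x with hndef
  have hn1 : n ≠ 1 := by
    rw [hndef, Ne, orderOf_eq_one_iff]; exact hx1
  have hn2 : 2 ≤ n := by omega
  set p : ℕ := n.minFac with hpdef
  have hp : p.Prime := Nat.minFac_prime hn1
  have hpn : p = n := by
    by_contra hne
    have hplt : p < n := lt_of_le_of_ne (Nat.minFac_le (by omega)) hne
    have hppos : 0 < p := hp.pos
    have hxnot : x ^ p ≠ 1 := by
      intro h1
      have hdvd : n ∣ p := orderOf_dvd_of_pow_eq_one h1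
      have := Nat.le_of_dvd hppos hdvd
      omega
    obtain ⟨k, hone⟩ := hpow p hppos hxnot
    have hdvd : ((n : ℤ)) ∣ ((p : ℤ) * k - 1) := orderOf_dvd_iff_zpow_eq_one.mpr hone
    have hpdvdn : (p : ℤ) ∣ (n : ℤ) := Int.natCast_dvd_natCast.mpr (Nat.minFac_dvd n)
    have h1 : (p : ℤ) ∣ ((p : ℤ) * k - 1) := dvd_trans hpdvdn hdvd
    have h2 : (p : ℤ) ∣ (p : ℤ) * k := Dvd.intro k rfl
    have h3 : (p : ℤ) ∣ 1 := by
      have := dvd_sub h2 h1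
      simpa using this
    have h4 : (p : ℤ) ≤ 1 := Int.le_of_dvd one_pos h3
    have := hp.two_le
    omega
  have hcard : Nat.card (G ⧸ N) = n := by
    rw [hndef, ← Nat.card_zpowers x, hxtop]
    exact (Nat.card_congr Subgroup.topEquiv.toEquiv).symm
  exact ⟨p, hp, by rw [Subgroup.index_eq_card, hcard, hpn]⟩

end Aux

/-- If `G` has exactly two non-nilpotent subgroups `G` and `K` and `K` is not finitely
generated, then `G` is locally nilpotent; in particular every maximal subgroup of `G` is
normal of prime index. -/
theorem stmt7 {G : Type*} [Group G] (K : Subgroup G) (h : ExactlyTwoNonNilpotent K)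
    (hfg : ¬ K.FG) :
    (∀ H : Subgroup G, H.FG → Group.IsNilpotent ↥H) ∧
      ∀ M : Subgroup G, IsCoatom M → M.Normal ∧ ∃ p : ℕ, p.Prime ∧ M.index = p := by
  obtain ⟨hGnil, hKlt, hKnil, hdich⟩ := h
  -- K is normal
  have hKnormal : K.Normal := by
    have hmap : ∀ g : G, Subgroup.map (MulAut.conj g).toMonoidHom K = K := by
      intro g
      set f : G →* G := (MulAut.conj g).toMonoidHom with hfdef
      have hinj : Function.Injective f := (MulAut.conj g).injective
      have hnn : ¬ Group.IsNilpotent ↥(Subgroup.map f K) := by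
        intro hnil
        exact hKnil (nilpotent_of_mulEquiv (Subgroup.equivMapOfInjective K f hinj).symm)
      rcases hdich _ hnn with htop | hK
      · exfalso
        have : K = ⊤ := by
          have h1 : Subgroup.comap f (Subgroup.map f K) = K := by
            rw [Subgroup.comap_map_eq, (MulAut.conj g).toMonoidHom.ker_eq_bot_iff.mpr hinj,
              sup_bot_eq]
          rw [← h1, htop, Subgroup.comap_top]
        exact hKlt.ne this
      · exact hK
    constructor
    intro k hk g
    have : (MulAut.conj g).toMonoidHom k ∈ Subgroup.map (MulAut.conj g).toMonoidHom K :=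
      Subgroup.mem_map_of_mem _ hk
    rw [hmap g] at this
    simpa [MulAut.conj_apply] using this
  -- K is a coatom
  have hKco : IsCoatom K := by
    refine ⟨hKlt.ne, fun H hH => ?_⟩
    have hHnn : ¬ Group.IsNilpotent ↥H := by
      intro hnil
      exact hKnil (ETNN.nilpotent_of_le hH.le hnil)
    rcases hdich H hHnn with htop | hK
    · exact htop
    · exact absurd hK hH.ne'
  -- Part 1: local nilpotency
  have part1 : ∀ H : Subgroup G, H.FG → Group.IsNilpotent ↥H := by
    intro H hH
    by_contra hnil
    rcases hdich H hnil with rfl | rfl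
    · -- H = ⊤, so G is finitely generated
      haveI : Group.FG G := by
        rw [Group.fg_iff]
        obtain ⟨S, hS, hSfin⟩ := (Subgroup.fg_iff _).mp hH
        exact ⟨S, hS, hSfin⟩
      obtain ⟨p, hp, hip⟩ := ETNN.prime_index_of_coatom hKnormal hKco
      haveI : K.FiniteIndex := ⟨by rw [hip]; exact hp.ne_zero⟩
      haveI : Group.FG ↥K := Subgroup.fg_of_index_ne_zero K
      exact hfg ((Group.fg_iff_subgroup_fg K).mp inferInstance)
    · exact hfg hH
  refine ⟨part1, fun M hM => ?_⟩
  have hcomm : commutator G ≤ M := ETNN.commutator_le_coatom part1 hM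
  have hnormal : M.Normal := ETNN.normal_of_commutator_le hcomm
  exact ⟨hnormal, ETNN.prime_index_of_coatom hnormal hM⟩
end
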